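/- Let X be a topological space and let (U_n)_{n∈ℕ}, (V_n)_{n∈ℕ} be two sequences of pairwise disjoint nonempty open subsets of X. Then either (1) for almost all n, U_n = V_n and U_n is a singleton, or (2) there exists an infinite M ⊆ ℕ and nonempty open sets U'_n ⊆ U_n and V'_n ⊆ V_n for n ∈ M such that (⋃_{n∈M} U'_n) ∩ (⋃_{n∈M} V'_n) = ∅. -/

import Mathlib

open Set Filter Topology Function

/-- A free ultrafilter on ℕ: one containing no singleton. -/
def FreeUF (p : Ultrafilter ℕ) : Prop := ∀ n : ℕ, ({n} : Set ℕ) ∉ p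

/-- `l` is the `p`-limit of the sequence `x`. -/
def PLim {X : Type*} [TopologicalSpace X] (p : Ultrafilter ℕ) (x : ℕ → X) (l : X) : Prop :=
  Filter.Tendsto x (p : Filter ℕ) (nhds l)

/-- A βω-space: the closure of any countably infinite discrete subset with compact closure
is homeomorphic to βℕ. -/
def BetaOmegaSpace (X : Type*) [TopologicalSpace X] : Prop :=
  ∀ M : Set X, M.Countable → M.Infinite → DiscreteTopology M → IsCompact (closure M) →
    Nonempty (closure M ≃ₜ StoneCech ℕ)

/-- Keisler–Rudin (Rudin–Keisler) order on ultrafilters on ℕ. -/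
def RKle (p q : Ultrafilter ℕ) : Prop := ∃ f : ℕ → ℕ, Ultrafilter.map f q = p

/-- A homogeneous space. -/
def Homogeneous (X : Type*) [TopologicalSpace X] : Prop :=
  ∀ x y : X, ∃ h : X ≃ₜ X, h x = y


lemma exists_indep (S : Set ℕ) (hS : S.Infinite) (f : ℕ → ℕ) (hf : ∀ n ∈ S, f n ≠ n) :
    ∃ M : Set ℕ, M ⊆ S ∧ M.Infinite ∧ ∀ n ∈ M, f n ∉ M := by
  by_cases hfib : ∃ v, {n | n ∈ S ∧ f n = v}.Infinite
  · obtain ⟨v, hv⟩ := hfib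
    refine ⟨{n | n ∈ S ∧ f n = v} \ {v}, fun n hn => hn.1.1, hv.diff (Set.finite_singleton v), ?_⟩
    intro n hn hmem
    exact hmem.2 hn.1.2
  · push_neg at hfib
    have key : ∀ B : ℕ, ∃ n, n ∈ S ∧ B < n ∧ B < f n := by
      intro B
      have h1 : {n | n ∈ S ∧ f n ≤ B}.Finite := by
        have hsub : {n | n ∈ S ∧ f n ≤ B} ⊆ ⋃ v ∈ Finset.range (B + 1), {n | n ∈ S ∧ f n = v} := by
          intro n hn
          simp only [Set.mem_iUnion, Finset.mem_range]
          exact ⟨f n, Nat.lt_succ_of_le hn.2, hn.1, rfl⟩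
        exact (Set.Finite.biUnion (Finset.range (B+1)).finite_toSet
          (fun v _ => hfib v)).subset hsub
      have h2 : ((S \ {n | n ∈ S ∧ f n ≤ B}) \ Set.Iic B).Infinite :=
        (hS.diff h1).diff (Set.finite_Iic B)
      obtain ⟨n, hn⟩ := h2.nonempty
      refine ⟨n, hn.1.1, ?_, ?_⟩
      · exact Nat.lt_of_not_le (fun h => hn.2 h)
      · by_contra h
        exact hn.1.2 ⟨hn.1.1, Nat.le_of_not_lt h⟩
    choose g hgS hgB hgf using key
    set Bd : ℕ → ℕ := fun k => Nat.rec 0 (fun _ B => max (g B) (f (g B))) k with hBd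
    have hBd0 : Bd 0 = 0 := rfl
    have hBdsucc : ∀ k, Bd (k + 1) = max (g (Bd k)) (f (g (Bd k))) := fun k => rfl
    set a : ℕ → ℕ := fun k => g (Bd k) with ha
    have hBdlt : ∀ k, Bd k < Bd (k + 1) := by
      intro k; rw [hBdsucc]
      exact lt_of_lt_of_le (hgB (Bd k)) (le_max_left _ _)
    have hBdmono : StrictMono Bd := strictMono_nat_of_lt_succ hBdlt
    have halt : ∀ k j, k < j → a k < a j ∧ f (a k) < a j ∧ a k < f (a j) := by
      intro k j hkj
      have h1 : Bd (k + 1) ≤ Bd j := hBdmono.monotone hkj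
      have h2 : a k ≤ Bd (k + 1) := le_max_left _ _
      have h3 : f (a k) ≤ Bd (k + 1) := le_max_right _ _
      exact ⟨lt_of_le_of_lt (h2.trans h1) (hgB (Bd j)),
        lt_of_le_of_lt (h3.trans h1) (hgB (Bd j)),
        lt_of_le_of_lt (h2.trans h1) (hgf (Bd j))⟩
    have hainj : Function.Injective a := by
      intro k j h
      rcases lt_trichotomy k j with hlt | he | hgt
      · exact absurd h (ne_of_lt (halt k j hlt).1)
      · exact he
      · exact absurd h.symm (ne_of_lt (halt j k hgt).1)
    refine ⟨Set.range a, ?_, Set.infinite_range_of_injective hainj, ?_⟩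
    · rintro _ ⟨k, rfl⟩; exact hgS (Bd k)
    · rintro _ ⟨k, rfl⟩ ⟨j, hj⟩
      rcases lt_trichotomy k j with hlt | he | hgt
      · exact absurd hj (ne_of_gt (halt k j hlt).2.1)
      · subst he; exact hf (a k) (hgS (Bd k)) hj.symm
      · exact absurd hj (ne_of_lt (halt j k hgt).2.2)


lemma sep_pair {X : Type*} [TopologicalSpace X] [T2Space X] (Un Vn : Set X)
    (hUo : IsOpen Un) (hVo : IsOpen Vn) (hUne : Un.Nonempty) (hVne : Vn.Nonempty)
    (hne : ¬(Un = Vn ∧ ∃ u, Un = {u})) :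
    ∃ A B : Set X, IsOpen A ∧ A.Nonempty ∧ A ⊆ Un ∧ IsOpen B ∧ B.Nonempty ∧ B ⊆ Vn ∧
      A ∩ B = ∅ := by
  by_cases hd : Un ∩ Vn = ∅
  · exact ⟨Un, Vn, hUo, hUne, subset_rfl, hVo, hVne, subset_rfl, hd⟩
  · obtain ⟨x, hxU, hxV⟩ := Set.nonempty_iff_ne_empty.mpr hd
    have hz : ∃ z ∈ Un ∪ Vn, z ≠ x := by
      by_contra h
      push_neg at h
      have hU1 : Un = {x} := by
        apply Set.eq_singleton_iff_nonempty_unique_mem.mpr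
        exact ⟨hUne, fun y hy => h y (Or.inl hy)⟩
      have hV1 : Vn = {x} := by
        apply Set.eq_singleton_iff_nonempty_unique_mem.mpr
        exact ⟨hVne, fun y hy => h y (Or.inr hy)⟩
      exact hne ⟨hU1.trans hV1.symm, x, hU1⟩
    obtain ⟨z, hzUV, hzx⟩ := hz
    obtain ⟨W1, W2, hW1o, hW2o, hxW1, hzW2, hW12⟩ := t2_separation hzx.symm
    rcases hzUV with hzU | hzV
    · refine ⟨Un ∩ W2, Vn ∩ W1, hUo.inter hW2o, ⟨z, hzU, hzW2⟩, Set.inter_subset_left,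
        hVo.inter hW1o, ⟨x, hxV, hxW1⟩, Set.inter_subset_left, ?_⟩
      rw [Set.eq_empty_iff_forall_notMem]
      rintro y ⟨⟨-, hy2⟩, ⟨-, hy1⟩⟩
      exact Set.disjoint_iff.mp hW12 ⟨hy1, hy2⟩
    · refine ⟨Un ∩ W1, Vn ∩ W2, hUo.inter hW1o, ⟨x, hxU, hxW1⟩, Set.inter_subset_left,
        hVo.inter hW2o, ⟨z, hzV, hzW2⟩, Set.inter_subset_left, ?_⟩
      rw [Set.eq_empty_iff_forall_notMem]
      rintro y ⟨⟨-, hy1⟩, ⟨-, hy2⟩⟩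
      exact Set.disjoint_iff.mp hW12 ⟨hy1, hy2⟩

/-- Two disjoint sequences of nonempty open sets either eventually coincide as
singletons or can be refined along an infinite set to families with disjoint unions. -/
theorem stmt_2 {X : Type*} [TopologicalSpace X] [T2Space X] [CompletelyRegularSpace X]
    (U V : ℕ → Set X)
    (hUopen : ∀ n, IsOpen (U n)) (hUne : ∀ n, (U n).Nonempty)
    (hUdisj : ∀ n m, n ≠ m → U n ∩ U m = ∅)
    (hVopen : ∀ n, IsOpen (V n)) (hVne : ∀ n, (V n).Nonempty)
    (hVdisj : ∀ n m, n ≠ m → V n ∩ V m = ∅) :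
    (∀ᶠ n in Filter.atTop, U n = V n ∧ ∃ u : X, U n = {u}) ∨
      (∃ (M : Set ℕ) (U' V' : ℕ → Set X), M.Infinite ∧
        (∀ n ∈ M, IsOpen (U' n) ∧ (U' n).Nonempty ∧ U' n ⊆ U n) ∧
        (∀ n ∈ M, IsOpen (V' n) ∧ (V' n).Nonempty ∧ V' n ⊆ V n) ∧
        (⋃ n ∈ M, U' n) ∩ (⋃ n ∈ M, V' n) = ∅) := by
  set S : Set ℕ := {n | ¬(U n = V n ∧ ∃ u : X, U n = {u})} with hSdef
  by_cases hSfin : S.Finite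
  · left
    have h := Set.Finite.eventually_cofinite_notMem hSfin
    rw [Nat.cofinite_eq_atTop] at h
    filter_upwards [h] with n hn
    exact not_not.mp hn
  · right
    have hS : S.Infinite := hSfin
    have hABex : ∀ n : ℕ, ∃ A B : Set X, n ∈ S →
        IsOpen A ∧ A.Nonempty ∧ A ⊆ U n ∧ IsOpen B ∧ B.Nonempty ∧ B ⊆ V n ∧ A ∩ B = ∅ := by
      intro n
      by_cases hn : n ∈ S
      · obtain ⟨A, B, h1, h2, h3, h4, h5, h6, h7⟩ :=
          sep_pair (U n) (V n) (hUopen n) (hVopen n) (hUne n) (hVne n) hn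
        exact ⟨A, B, fun _ => ⟨h1, h2, h3, h4, h5, h6, h7⟩⟩
      · exact ⟨∅, ∅, fun h => absurd h hn⟩
    choose A B hAB using hABex
    have hA'ex : ∀ n : ℕ, ∃ (A' : Set X) (m : ℕ), m ≠ n ∧ (n ∈ S →
        IsOpen A' ∧ A'.Nonempty ∧ A' ⊆ U n ∧ ∀ k ∈ S, k ≠ m → A' ∩ B k = ∅) := by
      intro n
      by_cases hn : n ∈ S
      · obtain ⟨hAo, hAne, hAU, hBo, hBne, hBV, hABd⟩ := hAB n hn
        by_cases hmeet : ∃ k ∈ S, (A n ∩ B k).Nonempty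
        · obtain ⟨k, hkS, hk⟩ := hmeet
          have hkn : k ≠ n := by
            rintro rfl
            rw [hABd] at hk
            exact Set.not_nonempty_empty hk
          refine ⟨A n ∩ B k, k, hkn, fun _ =>
            ⟨hAo.inter (hAB k hkS).2.2.2.1, hk, fun x hx => hAU hx.1, ?_⟩⟩
          intro j hjS hjk
          rw [Set.eq_empty_iff_forall_notMem]
          rintro x ⟨⟨-, hxk⟩, hxj⟩
          have hVk : x ∈ V k := (hAB k hkS).2.2.2.2.2.1 hxk
          have hVj : x ∈ V j := (hAB j hjS).2.2.2.2.2.1 hxj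
          have := hVdisj k j (fun h => hjk h.symm)
          rw [Set.eq_empty_iff_forall_notMem] at this
          exact this x ⟨hVk, hVj⟩
        · push_neg at hmeet
          refine ⟨A n, n + 1, Nat.succ_ne_self n, fun _ => ⟨hAo, hAne, hAU, ?_⟩⟩
          intro j hjS _
          exact hmeet j hjS
      · exact ⟨∅, n + 1, Nat.succ_ne_self n, fun h => absurd h hn⟩
    choose A' f hfne hA' using hA'ex
    obtain ⟨M, hMS, hMinf, hMf⟩ := exists_indep S hS f (fun n _ => hfne n)
    refine ⟨M, A', B, hMinf, ?_, ?_, ?_⟩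
    · intro n hn
      obtain ⟨h1, h2, h3, -⟩ := hA' n (hMS hn)
      exact ⟨h1, h2, h3⟩
    · intro n hn
      obtain ⟨-, -, -, h4, h5, h6, -⟩ := hAB n (hMS hn)
      exact ⟨h4, h5, h6⟩
    · rw [Set.eq_empty_iff_forall_notMem]
      rintro x ⟨hx1, hx2⟩
      simp only [Set.mem_iUnion] at hx1 hx2
      obtain ⟨n, hnM, hxn⟩ := hx1
      obtain ⟨m, hmM, hxm⟩ := hx2
      have hmne : m ≠ f n := fun h => hMf n hnM (h ▸ hmM)
      have := (hA' n (hMS hnM)).2.2.2 m (hMS hmM) hmne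
      rw [Set.eq_empty_iff_forall_notMem] at this
      exact this x ⟨hxn, hxm⟩
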